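/- arXiv:quant-ph/0505091 — 2 statements merged into one kernel-verified Lean document; each statement's English description precedes it below -/
import Mathlib

section
/- For every two-qubit density matrix ρ (a 4×4 positive semidefinite matrix indexed by Fin 2 × Fin 2 with trace 1) and every decomposition of ρ into a finite family of vectors χ_k, the total (unnormalized) concurrence of the decomposition is bounded by the concurrence of assistance: ∑_k 2·|χ_k 0 0 · χ_k 1 1 − χ_k 0 1 · χ_k 1 0| ≤ Tr R(ρ). -/
open Matrix Complex Kronecker Finset
open scoped ComplexOrder

noncomputable section

abbrev TwoQubitMat := Matrix (Fin 2 × Fin 2) (Fin 2 × Fin 2) ℂ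

def sigmaY : Matrix (Fin 2) (Fin 2) ℂ := !![0, -Complex.I; Complex.I, 0]

def spinFlip (ρ : TwoQubitMat) : TwoQubitMat :=
  (sigmaY ⊗ₖ sigmaY) * ρ.map (starRingEnd ℂ) * (sigmaY ⊗ₖ sigmaY)

def matSqrt {m : Type*} [Fintype m] [DecidableEq m] (M : Matrix m m ℂ) : Matrix m m ℂ :=
  open scoped Classical in
  if h : M.PosSemidef then (h.1.eigenvectorUnitary : Matrix m m ℂ) *
    diagonal (((↑) : ℝ → ℂ) ∘ (Real.sqrt ·) ∘ h.1.eigenvalues) *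
    (star h.1.eigenvectorUnitary : Matrix m m ℂ) else 0

def Rmat (ρ : TwoQubitMat) : TwoQubitMat :=
  matSqrt (matSqrt ρ * spinFlip ρ * matSqrt ρ)

def CoA (ρ : TwoQubitMat) : ℝ := (Rmat ρ).trace.re

def lmin2 (M : Matrix (Fin 2) (Fin 2) ℂ) : ℝ :=
  if h : M.IsHermitian then min (h.eigenvalues 0) (h.eigenvalues 1) else 0

def maxEig4 (M : TwoQubitMat) : ℝ :=
  if h : M.IsHermitian then Finset.univ.sup' Finset.univ_nonempty h.eigenvalues else 0

def Conc (ρ : TwoQubitMat) : ℝ := max 0 (2 * maxEig4 (Rmat ρ) - (Rmat ρ).trace.re)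

def eigMultiset (M : TwoQubitMat) : Multiset ℝ :=
  if h : M.IsHermitian then Finset.univ.val.map h.eigenvalues else 0

def rhoAB (ψ : Fin 2 → Fin 2 → Fin 2 → ℂ) : TwoQubitMat :=
  fun p q => ∑ l, ψ p.1 p.2 l * (starRingEnd ℂ) (ψ q.1 q.2 l)

def rhoAS (ψ : Fin 2 → Fin 2 → Fin 2 → ℂ) : TwoQubitMat :=
  fun p q => ∑ j, ψ p.1 j p.2 * (starRingEnd ℂ) (ψ q.1 j q.2)

def rhoA (ψ : Fin 2 → Fin 2 → Fin 2 → ℂ) : Matrix (Fin 2) (Fin 2) ℂ :=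
  fun i i' => ∑ j, ∑ l, ψ i j l * (starRingEnd ℂ) (ψ i' j l)

/-- Concurrence of a (possibly unnormalized) two-qubit vector. -/
def conc2 (φ : Fin 2 → Fin 2 → ℂ) : ℝ :=
  2 * ‖(φ 0 0 * φ 1 1 - φ 0 1 * φ 1 0)‖

section Auxiliary

set_option linter.unusedSectionVars false

variable {n ι : Type*} [Fintype n] [DecidableEq n] [Fintype ι]

/-- Positive semidefinite square root via the spectral theorem. -/
def Matrix.PosSemidef.sqrt {M : Matrix n n ℂ} (h : M.PosSemidef) : Matrix n n ℂ :=
  (h.1.eigenvectorUnitary : Matrix n n ℂ) *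
    diagonal (((↑) : ℝ → ℂ) ∘ (Real.sqrt ·) ∘ h.1.eigenvalues) *
    (star h.1.eigenvectorUnitary : Matrix n n ℂ)

open scoped MatrixOrder in
lemma Matrix.PosSemidef.sqrt_eq_cfc_sqrt {M : Matrix n n ℂ} (hM : M.PosSemidef) :
    hM.sqrt = CFC.sqrt M := by
  have h0 : 0 ≤ M := hM.nonneg
  rw [CFC.sqrt_eq_cfc, cfc_nnreal_eq_real _ M, hM.1.cfc_eq]
  simp only [IsHermitian.cfc, Unitary.conjStarAlgAut_apply, Matrix.PosSemidef.sqrt]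
  congr
  funext i
  simp [Real.coe_sqrt, Real.coe_toNNReal']
  rcases le_total 0 i with h | h
  · rw [max_eq_left h]
  · rw [max_eq_right h, Real.sqrt_zero, Real.sqrt_eq_zero'.mpr h]

open scoped MatrixOrder in
lemma Matrix.PosSemidef.posSemidef_sqrt {M : Matrix n n ℂ} (hM : M.PosSemidef) :
    hM.sqrt.PosSemidef := by
  rw [hM.sqrt_eq_cfc_sqrt]
  exact (CFC.sqrt_nonneg M).posSemidef

open scoped MatrixOrder in
lemma Matrix.PosSemidef.sqrt_mul_self {M : Matrix n n ℂ} (hM : M.PosSemidef) :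
    hM.sqrt * hM.sqrt = M := by
  have h0 : 0 ≤ M := hM.nonneg
  rw [hM.sqrt_eq_cfc_sqrt]
  exact CFC.sqrt_mul_sqrt_self M

open scoped MatrixOrder in
lemma Matrix.PosSemidef.eq_sqrt_of_sq_eq {A B : Matrix n n ℂ} (hA : A.PosSemidef)
    (hB : B.PosSemidef) (hAB : A ^ 2 = B) : A = hB.sqrt := by
  have h0 : 0 ≤ A := hA.nonneg
  rw [hB.sqrt_eq_cfc_sqrt, ← hAB, CFC.sqrt_sq A]

/-- Cauchy-Schwarz corollary. -/
lemma aux_cs_sqrt (f g : ι → ℝ) (hf : ∀ k, 0 ≤ f k) (hg : ∀ k, 0 ≤ g k)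
    (h1 : ∑ k, f k ^ 2 ≤ 1) (lam : ℝ) (hlam : 0 ≤ lam) (h2 : ∑ k, g k ^ 2 ≤ lam) :
    ∑ k, f k * g k ≤ Real.sqrt lam := by
  have h3 := Finset.sum_mul_sq_le_sq_mul_sq Finset.univ f g
  have h4 : (∑ k, f k * g k) ^ 2 ≤ lam := by
    calc (∑ k, f k * g k) ^ 2 ≤ (∑ k, f k ^ 2) * ∑ k, g k ^ 2 := h3
    _ ≤ 1 * lam := by
        apply mul_le_mul h1 h2 (Finset.sum_nonneg fun k _ => sq_nonneg _) zero_le_one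
    _ = lam := one_mul lam
  have h5 : 0 ≤ ∑ k, f k * g k := Finset.sum_nonneg fun k _ => mul_nonneg (hf k) (hg k)
  nlinarith [Real.sq_sqrt hlam, Real.sqrt_nonneg lam, sq_nonneg (∑ k, f k * g k - Real.sqrt lam)]

lemma aux_dot_self_eq_normSq (x : n → ℂ) :
    star x ⬝ᵥ x = ((∑ p, Complex.normSq (x p) : ℝ) : ℂ) := by
  simp [dotProduct, Pi.star_apply, Complex.normSq_eq_conj_mul_self]

lemma aux_star_dot_comm (x y : n → ℂ) : star x ⬝ᵥ y = (starRingEnd ℂ) (star y ⬝ᵥ x) := by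
  rw [dotProduct, dotProduct, map_sum]
  exact Finset.sum_congr rfl fun p _ => by simp [mul_comm]

lemma aux_dot_mulVec_expand (Bm : Matrix n n ℂ) (x w : n → ℂ) :
    star x ⬝ᵥ (Bm *ᵥ w) = ∑ q, w q * (star x ⬝ᵥ (Bm *ᵥ Pi.single q 1)) := by
  simp only [dotProduct, Matrix.mulVec, Pi.star_apply, Finset.mul_sum]
  rw [Finset.sum_comm]
  refine Finset.sum_congr rfl fun q _ => ?_
  refine Finset.sum_congr rfl fun p _ => ?_
  simp only [Pi.single_apply, mul_ite, mul_one, mul_zero, Finset.mul_sum,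
    Finset.sum_ite_eq', Finset.mem_univ, if_true]
  ring

/-- coefficient frame bound -/
lemma aux_frame_coeff (c : ι → n → ℂ) (d : n → ℝ) (hd : ∀ j, d j ≤ 1)
    (hc : ∀ j j', ∑ k, c k j * (starRingEnd ℂ) (c k j') = if j = j' then (d j : ℂ) else 0)
    (f : n → ℂ) :
    ∑ k, Complex.normSq (∑ j, (starRingEnd ℂ) (c k j) * f j) ≤ ∑ j, Complex.normSq (f j) := by
  have key : ((∑ k, Complex.normSq (∑ j, (starRingEnd ℂ) (c k j) * f j) : ℝ) : ℂ)
      = ∑ j, (d j : ℂ) * Complex.normSq (f j) := by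
    push_cast
    calc (∑ k, (Complex.normSq (∑ j, (starRingEnd ℂ) (c k j) * f j) : ℂ))
        = ∑ k, (∑ j, (starRingEnd ℂ) (c k j) * f j) * (∑ j', c k j' * (starRingEnd ℂ) (f j')) := by
          refine Finset.sum_congr rfl fun k _ => ?_
          rw [← Complex.mul_conj]
          congr 1
          simp
      _ = ∑ k, ∑ j', ∑ j, (c k j * (starRingEnd ℂ) (c k j')) * ((starRingEnd ℂ) (f j) * f j') := by
          refine Finset.sum_congr rfl fun k _ => ?_
          rw [Finset.sum_mul_sum]
          refine Finset.sum_congr rfl fun j' _ => Finset.sum_congr rfl fun j _ => ?_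
          ring
      _ = ∑ j', ∑ j, (∑ k, c k j * (starRingEnd ℂ) (c k j')) * ((starRingEnd ℂ) (f j) * f j') := by
          rw [Finset.sum_comm]
          refine Finset.sum_congr rfl fun j' _ => ?_
          rw [Finset.sum_comm]
          refine Finset.sum_congr rfl fun j _ => ?_
          rw [← Finset.sum_mul]
      _ = ∑ j, (d j : ℂ) * Complex.normSq (f j) := by
          rw [Finset.sum_comm]
          refine Finset.sum_congr rfl fun j _ => ?_
          rw [Finset.sum_eq_single j]
          · rw [hc j j, if_pos rfl, Complex.normSq_eq_conj_mul_self]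
          · intro j' _ hj'
            rw [hc j j', if_neg (fun h => hj' h.symm), zero_mul]
          · simp
  have key2 : (∑ k, Complex.normSq (∑ j, (starRingEnd ℂ) (c k j) * f j) : ℝ)
      = ∑ j, d j * Complex.normSq (f j) := by
    have := congrArg Complex.re key
    simpa using this
  rw [key2]
  apply Finset.sum_le_sum
  intro j _
  calc d j * Complex.normSq (f j) ≤ 1 * Complex.normSq (f j) := by
        apply mul_le_mul_of_nonneg_right (hd j) (Complex.normSq_nonneg _)
    _ = _ := one_mul _

lemma aux_unitary_normSq (V : Matrix n n ℂ) (hV : Vᴴ * V = 1) (f : n → ℂ) :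
    ∑ p, Complex.normSq ((V *ᵥ f) p) = ∑ p, Complex.normSq (f p) := by
  have h : star (V *ᵥ f) ⬝ᵥ (V *ᵥ f) = star f ⬝ᵥ f := by
    rw [Matrix.star_mulVec, Matrix.dotProduct_mulVec, Matrix.vecMul_vecMul, hV,
      Matrix.vecMul_one]
  rw [aux_dot_self_eq_normSq, aux_dot_self_eq_normSq] at h
  exact_mod_cast h

lemma aux_basis_orth (V : Matrix n n ℂ) (hV : Vᴴ * V = 1) (j j' : n) :
    star (fun p => V p j) ⬝ᵥ (fun p => V p j') = if j = j' then 1 else 0 := by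
  have := congrFun (congrFun hV j) j'
  simpa [Matrix.mul_apply, Matrix.one_apply, dotProduct,
    Matrix.conjTranspose_apply, eq_comm] using this

lemma aux_basis_exp (V : Matrix n n ℂ) (hV' : V * Vᴴ = 1) (f : n → ℂ) (p : n) :
    f p = ∑ j, (star (fun q => V q j) ⬝ᵥ f) * V p j := by
  have h1 : ((V * Vᴴ) *ᵥ f) p = f p := by rw [hV']; simp
  rw [← h1, ← Matrix.mulVec_mulVec]
  simp only [Matrix.mulVec, dotProduct, Matrix.conjTranspose_apply,
    Pi.star_apply, Finset.mul_sum, Finset.sum_mul]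
  exact Finset.sum_congr rfl fun j _ => Finset.sum_congr rfl fun q _ => by ring

lemma aux_herm_eig (A : Matrix n n ℂ) (hA : A.IsHermitian) (j : n) :
    A *ᵥ (fun p => (hA.eigenvectorUnitary : Matrix n n ℂ) p j)
      = fun p => (hA.eigenvalues j : ℂ) * (hA.eigenvectorUnitary : Matrix n n ℂ) p j := by
  have h1 := hA.mulVec_eigenvectorBasis j
  have h2 : (fun p => (hA.eigenvectorUnitary : Matrix n n ℂ) p j)
      = ⇑(hA.eigenvectorBasis j) := by
    funext q
    exact hA.eigenvectorUnitary_apply q j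
  rw [h2]
  funext p
  calc (A *ᵥ ⇑(hA.eigenvectorBasis j)) p
      = (hA.eigenvalues j • ⇑(hA.eigenvectorBasis j)) p := by rw [h1]
    _ = (hA.eigenvalues j : ℂ) * hA.eigenvectorBasis j p := by
        simp [Pi.smul_apply, Complex.real_smul]

lemma aux_sqrt_eig (A : Matrix n n ℂ) (hA : A.PosSemidef) (j : n) :
    hA.sqrt *ᵥ (fun p => (hA.1.eigenvectorUnitary : Matrix n n ℂ) p j)
      = fun p => ((Real.sqrt (hA.1.eigenvalues j) : ℝ) : ℂ)
          * (hA.1.eigenvectorUnitary : Matrix n n ℂ) p j := by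
  set V := (hA.1.eigenvectorUnitary : Matrix n n ℂ) with hVdef
  have hVu : Vᴴ * V = 1 := by
    rw [hVdef, ← Matrix.star_eq_conjTranspose]
    exact Matrix.UnitaryGroup.star_mul_self _
  have hstep : (star V) *ᵥ (fun p => V p j) = Pi.single j 1 := by
    funext q
    simp only [Matrix.mulVec, dotProduct, Pi.star_apply, Matrix.star_apply]
    have := congrFun (congrFun hVu q) j
    simp only [Matrix.mul_apply, Matrix.conjTranspose_apply, Matrix.one_apply] at this
    rw [this, Pi.single_apply]
  rw [Matrix.PosSemidef.sqrt]
  rw [← Matrix.mulVec_mulVec, ← Matrix.mulVec_mulVec]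
  rw [show (star hA.1.eigenvectorUnitary : Matrix n n ℂ) = star V from rfl, hstep]
  rw [Matrix.diagonal_mulVec_single]
  funext p
  simp only [Matrix.mulVec, dotProduct, Function.comp_apply]
  rw [Finset.sum_eq_single j]
  · simp [Pi.single_apply, hVdef, mul_comm]
    exact mul_comm _ _
  · intro q _ hq
    simp [Pi.single_apply, hq]
  · simp

lemma aux_core (M B : Matrix n n ℂ) (hM : M.PosSemidef) (hB : Bᴴ * B = M)
    (u v : ι → n → ℂ)
    (hu : ∀ f : n → ℂ, ∑ k, Complex.normSq (star (u k) ⬝ᵥ f) ≤ ∑ p, Complex.normSq (f p))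
    (hv : ∀ f : n → ℂ, ∑ k, Complex.normSq (star (v k) ⬝ᵥ f) ≤ ∑ p, Complex.normSq (f p)) :
    ∑ k, ‖star (u k) ⬝ᵥ (B *ᵥ v k)‖ ≤ ∑ j, Real.sqrt (hM.1.eigenvalues j) := by
  set U : Matrix n n ℂ := (hM.1.eigenvectorUnitary : Matrix n n ℂ) with hU
  have hUu : Uᴴ * U = 1 := by
    rw [hU, ← Matrix.star_eq_conjTranspose]
    exact Matrix.UnitaryGroup.star_mul_self _
  have hUu' : U * Uᴴ = 1 := by
    rw [hU, ← Matrix.star_eq_conjTranspose]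
    exact (Matrix.mem_unitaryGroup_iff).mp (hM.1.eigenvectorUnitary).2
  set e : n → n → ℂ := fun j p => U p j with he
  have horth : ∀ j j', star (e j) ⬝ᵥ e j' = if j = j' then 1 else 0 :=
    fun j j' => aux_basis_orth U hUu j j'
  have hexp : ∀ f : n → ℂ, ∀ p, f p = ∑ j, (star (e j) ⬝ᵥ f) * e j p :=
    fun f p => aux_basis_exp U hUu' f p
  have heig : ∀ j, M *ᵥ e j = fun p => (hM.1.eigenvalues j : ℂ) * e j p :=
    fun j => aux_herm_eig M hM.1 j
  have hnorm_e : ∀ j, ∑ p, Complex.normSq (e j p) = 1 := by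
    intro j
    have := horth j j
    rw [aux_dot_self_eq_normSq, if_pos rfl] at this
    exact_mod_cast this
  have hFnorm : ∀ j, ∑ p, Complex.normSq ((B *ᵥ e j) p) = hM.1.eigenvalues j := by
    intro j
    have h1 : star (B *ᵥ e j) ⬝ᵥ (B *ᵥ e j) = star (e j) ⬝ᵥ (M *ᵥ e j) := by
      rw [Matrix.star_mulVec, Matrix.dotProduct_mulVec, Matrix.vecMul_vecMul, hB,
        ← Matrix.dotProduct_mulVec]
    rw [heig j] at h1
    have h2 : star (e j) ⬝ᵥ (fun p => (hM.1.eigenvalues j : ℂ) * e j p)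
        = (hM.1.eigenvalues j : ℂ) * (star (e j) ⬝ᵥ e j) := by
      simp only [dotProduct, Pi.star_apply, Finset.mul_sum]
      exact Finset.sum_congr rfl fun p _ => by ring
    rw [h2, horth j j, if_pos rfl, mul_one] at h1
    rw [aux_dot_self_eq_normSq] at h1
    exact_mod_cast h1
  have hstep : ∀ k, star (u k) ⬝ᵥ (B *ᵥ v k)
      = ∑ j, (star (e j) ⬝ᵥ v k) * (star (u k) ⬝ᵥ (B *ᵥ e j)) := by
    intro k
    calc star (u k) ⬝ᵥ (B *ᵥ v k)
        = ∑ q, v k q * (star (u k) ⬝ᵥ (B *ᵥ Pi.single q 1)) := aux_dot_mulVec_expand B (u k) (v k)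
      _ = ∑ q, (∑ j, (star (e j) ⬝ᵥ v k) * e j q) * (star (u k) ⬝ᵥ (B *ᵥ Pi.single q 1)) := by
          refine Finset.sum_congr rfl fun q _ => ?_
          rw [← hexp (v k) q]
      _ = ∑ j, (star (e j) ⬝ᵥ v k) * ∑ q, e j q * (star (u k) ⬝ᵥ (B *ᵥ Pi.single q 1)) := by
          simp only [Finset.sum_mul]
          rw [Finset.sum_comm]
          simp only [Finset.mul_sum]
          exact Finset.sum_congr rfl fun j _ => Finset.sum_congr rfl fun q _ => by ring
      _ = ∑ j, (star (e j) ⬝ᵥ v k) * (star (u k) ⬝ᵥ (B *ᵥ e j)) := by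
          refine Finset.sum_congr rfl fun j _ => ?_
          rw [← aux_dot_mulVec_expand B (u k) (e j)]
  calc ∑ k, ‖star (u k) ⬝ᵥ (B *ᵥ v k)‖
      ≤ ∑ k, ∑ j, ‖star (e j) ⬝ᵥ v k‖ * ‖star (u k) ⬝ᵥ (B *ᵥ e j)‖ := by
        refine Finset.sum_le_sum fun k _ => ?_
        rw [hstep k]
        refine le_trans (norm_sum_le _ _) ?_
        refine Finset.sum_le_sum fun j _ => ?_
        rw [norm_mul]
    _ = ∑ j, ∑ k, ‖star (e j) ⬝ᵥ v k‖ * ‖star (u k) ⬝ᵥ (B *ᵥ e j)‖ :=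
        Finset.sum_comm
    _ ≤ ∑ j, Real.sqrt (hM.1.eigenvalues j) := by
        refine Finset.sum_le_sum fun j _ => ?_
        refine aux_cs_sqrt _ _ (fun k => norm_nonneg _) (fun k => norm_nonneg _)
          ?_ _ (hM.eigenvalues_nonneg j) ?_
        · have h1 : ∀ k : ι, ‖star (e j) ⬝ᵥ v k‖ ^ 2
              = Complex.normSq (star (v k) ⬝ᵥ e j) := by
            intro k
            rw [aux_star_dot_comm (e j) (v k), Complex.sq_norm, Complex.normSq_conj]
          calc ∑ k, ‖star (e j) ⬝ᵥ v k‖ ^ 2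
              = ∑ k, Complex.normSq (star (v k) ⬝ᵥ e j) := Finset.sum_congr rfl fun k _ => h1 k
            _ ≤ ∑ p, Complex.normSq (e j p) := hv (e j)
            _ = 1 := hnorm_e j
        · calc ∑ k, ‖star (u k) ⬝ᵥ (B *ᵥ e j)‖ ^ 2
              = ∑ k, Complex.normSq (star (u k) ⬝ᵥ (B *ᵥ e j)) := by
                refine Finset.sum_congr rfl fun k _ => ?_
                rw [Complex.sq_norm]
            _ ≤ ∑ p, Complex.normSq ((B *ᵥ e j) p) := hu (B *ᵥ e j)
            _ = hM.1.eigenvalues j := hFnorm j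

lemma aux_trace_sqrt (M : Matrix n n ℂ) (hM : M.PosSemidef) :
    (hM.sqrt).trace = ((∑ j, Real.sqrt (hM.1.eigenvalues j) : ℝ) : ℂ) := by
  rw [Matrix.PosSemidef.sqrt, Matrix.trace_mul_cycle]
  have h1 : (star hM.1.eigenvectorUnitary : Matrix n n ℂ) * hM.1.eigenvectorUnitary.1 = 1 :=
    Matrix.UnitaryGroup.star_mul_self _
  rw [h1, Matrix.one_mul, Matrix.trace_diagonal]
  push_cast
  rfl

lemma aux_conj_herm (M : Matrix n n ℂ) (hherm : M.IsHermitian) :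
    (M.map (starRingEnd ℂ)) = Mᵀ := by
  funext p q
  simp only [Matrix.map_apply, Matrix.transpose_apply]
  have := congrFun (congrFun hherm p) q
  rw [← this]
  simp [Matrix.conjTranspose_apply]

lemma aux_conc2_eq (φ : Fin 2 → Fin 2 → ℂ) :
    conc2 φ = ‖(fun p : Fin 2 × Fin 2 => φ p.1 p.2) ⬝ᵥ
        ((sigmaY ⊗ₖ sigmaY) *ᵥ (fun p : Fin 2 × Fin 2 => φ p.1 p.2))‖ := by
  have : ((fun p : Fin 2 × Fin 2 => φ p.1 p.2) ⬝ᵥ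
      ((sigmaY ⊗ₖ sigmaY) *ᵥ (fun p : Fin 2 × Fin 2 => φ p.1 p.2)))
      = -2 * (φ 0 0 * φ 1 1 - φ 0 1 * φ 1 0) := by
    simp [dotProduct, Matrix.mulVec, Fintype.sum_prod_type, Fin.sum_univ_two,
      sigmaY, Matrix.kroneckerMap_apply]
    ring_nf
  rw [conc2, this, norm_mul]
  simp

lemma aux_YY : (sigmaY ⊗ₖ sigmaY) * (sigmaY ⊗ₖ sigmaY) = 1 := by
  ext ⟨i,j⟩ ⟨k,l⟩
  simp [Matrix.mul_apply, Fintype.sum_prod_type, sigmaY, Matrix.kroneckerMap_apply,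
    Fin.sum_univ_two, Matrix.one_apply, Prod.ext_iff]
  fin_cases i <;> fin_cases j <;> fin_cases k <;> fin_cases l <;> norm_num

lemma aux_YH : (sigmaY ⊗ₖ sigmaY)ᴴ = (sigmaY ⊗ₖ sigmaY) := by
  ext ⟨i,j⟩ ⟨k,l⟩
  simp [Matrix.conjTranspose_apply, sigmaY, Matrix.kroneckerMap_apply]
  fin_cases i <;> fin_cases j <;> fin_cases k <;> fin_cases l <;> norm_num

lemma aux_YT : (sigmaY ⊗ₖ sigmaY)ᵀ = (sigmaY ⊗ₖ sigmaY) := by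
  ext ⟨i,j⟩ ⟨k,l⟩
  simp [Matrix.transpose_apply, sigmaY, Matrix.kroneckerMap_apply]
  fin_cases i <;> fin_cases j <;> fin_cases k <;> fin_cases l <;> norm_num

end Auxiliary

theorem decomposition_concurrence_le_CoA (ρ : TwoQubitMat)
    (hpsd : ρ.PosSemidef) (htr : ρ.trace = 1)
    (ι : Type) [Fintype ι] (χ : ι → Fin 2 → Fin 2 → ℂ)
    (hdec : ∀ i j i' j' : Fin 2,
      ρ (i, j) (i', j') = ∑ k, χ k i j * (starRingEnd ℂ) (χ k i' j')) :
    ∑ k, conc2 (χ k) ≤ CoA ρ := by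
  classical
  set c : ι → (Fin 2 × Fin 2) → ℂ := fun k p => χ k p.1 p.2 with hcdef
  have hρdec : ∀ p q : Fin 2 × Fin 2, ρ p q = ∑ k, c k p * (starRingEnd ℂ) (c k q) := by
    intro p q
    have := hdec p.1 p.2 q.1 q.2
    simpa [hcdef] using this
  have hsqρ : matSqrt ρ = hpsd.sqrt := dif_pos hpsd
  have hρconj : ρ.map (starRingEnd ℂ) = ρᵀ := aux_conj_herm ρ hpsd.1
  have hSpsd : (spinFlip ρ).PosSemidef := by
    rw [spinFlip, hρconj]
    have h := (hpsd.transpose).mul_mul_conjTranspose_same (sigmaY ⊗ₖ sigmaY)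
    rwa [aux_YH] at h
  have hsqpsd := hpsd.posSemidef_sqrt
  have hsqH : (hpsd.sqrt)ᴴ = hpsd.sqrt := hsqpsd.1
  have hCpsd : ((sigmaY ⊗ₖ sigmaY) * (hpsd.sqrt)ᵀ * (sigmaY ⊗ₖ sigmaY)).PosSemidef := by
    have h := (hsqpsd.transpose).mul_mul_conjTranspose_same (sigmaY ⊗ₖ sigmaY)
    rwa [aux_YH] at h
  have hC2 : ((sigmaY ⊗ₖ sigmaY) * (hpsd.sqrt)ᵀ * (sigmaY ⊗ₖ sigmaY)) ^ 2 = spinFlip ρ := by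
    rw [pow_two, spinFlip, hρconj]
    have h1 : ((sigmaY ⊗ₖ sigmaY) * (hpsd.sqrt)ᵀ * (sigmaY ⊗ₖ sigmaY))
        * ((sigmaY ⊗ₖ sigmaY) * (hpsd.sqrt)ᵀ * (sigmaY ⊗ₖ sigmaY))
        = (sigmaY ⊗ₖ sigmaY) * ((hpsd.sqrt)ᵀ *
            (((sigmaY ⊗ₖ sigmaY) * (sigmaY ⊗ₖ sigmaY)) * ((hpsd.sqrt)ᵀ * (sigmaY ⊗ₖ sigmaY)))) := by
      simp only [Matrix.mul_assoc]
    rw [h1, aux_YY, Matrix.one_mul]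
    have h2 : (hpsd.sqrt)ᵀ * ((hpsd.sqrt)ᵀ * (sigmaY ⊗ₖ sigmaY)) = ρᵀ * (sigmaY ⊗ₖ sigmaY) := by
      rw [← Matrix.mul_assoc, ← Matrix.transpose_mul, hpsd.sqrt_mul_self]
    rw [h2]
    simp only [Matrix.mul_assoc]
  have hCsqrt : (sigmaY ⊗ₖ sigmaY) * (hpsd.sqrt)ᵀ * (sigmaY ⊗ₖ sigmaY) = hSpsd.sqrt :=
    hCpsd.eq_sqrt_of_sq_eq hSpsd hC2
  have hkey : (hpsd.sqrt)ᵀ * (sigmaY ⊗ₖ sigmaY) = (sigmaY ⊗ₖ sigmaY) * hSpsd.sqrt := by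
    rw [← hCsqrt]
    have h3 : (sigmaY ⊗ₖ sigmaY) * ((sigmaY ⊗ₖ sigmaY) * (hpsd.sqrt)ᵀ * (sigmaY ⊗ₖ sigmaY))
        = ((sigmaY ⊗ₖ sigmaY) * (sigmaY ⊗ₖ sigmaY)) * ((hpsd.sqrt)ᵀ * (sigmaY ⊗ₖ sigmaY)) := by
      simp only [Matrix.mul_assoc]
    rw [h3, aux_YY, Matrix.one_mul]
  have hBB : (hSpsd.sqrt * hpsd.sqrt)ᴴ * (hSpsd.sqrt * hpsd.sqrt)
      = matSqrt ρ * spinFlip ρ * matSqrt ρ := by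
    rw [hsqρ, Matrix.conjTranspose_mul, hsqH, hSpsd.posSemidef_sqrt.1]
    have h4 : hpsd.sqrt * hSpsd.sqrt * (hSpsd.sqrt * hpsd.sqrt)
        = hpsd.sqrt * (hSpsd.sqrt * hSpsd.sqrt) * hpsd.sqrt := by
      simp only [Matrix.mul_assoc]
    rw [h4, hSpsd.sqrt_mul_self]
  have hMpsd : (matSqrt ρ * spinFlip ρ * matSqrt ρ).PosSemidef := by
    rw [← hBB]; exact Matrix.posSemidef_conjTranspose_mul_self _
  have hCoA : CoA ρ = ∑ j, Real.sqrt (hMpsd.1.eigenvalues j) := by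
    have h5 : Rmat ρ = hMpsd.sqrt := dif_pos hMpsd
    have h6 : CoA ρ = (Rmat ρ).trace.re := rfl
    rw [h6, h5, aux_trace_sqrt _ hMpsd]
    simp
  -- spectral data of ρ
  set V : TwoQubitMat := (hpsd.1.eigenvectorUnitary : TwoQubitMat) with hVdef
  set μ : (Fin 2 × Fin 2) → ℝ := hpsd.1.eigenvalues with hμdef
  have hVu : Vᴴ * V = 1 := by
    rw [hVdef, ← Matrix.star_eq_conjTranspose]
    exact Matrix.UnitaryGroup.star_mul_self _
  have hVu' : V * Vᴴ = 1 := by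
    rw [hVdef, ← Matrix.star_eq_conjTranspose]
    exact (Matrix.mem_unitaryGroup_iff).mp (hpsd.1.eigenvectorUnitary).2
  have hgeig : ∀ j, ρ *ᵥ (fun p => V p j) = fun p => (μ j : ℂ) * V p j :=
    fun j => aux_herm_eig ρ hpsd.1 j
  have hgsq : ∀ j, hpsd.sqrt *ᵥ (fun p => V p j)
      = fun p => ((Real.sqrt (μ j) : ℝ) : ℂ) * V p j := fun j => aux_sqrt_eig ρ hpsd j
  have horth : ∀ j j', star (fun p => V p j) ⬝ᵥ (fun p => V p j') = if j = j' then 1 else 0 :=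
    fun j j' => aux_basis_orth V hVu j j'
  set a : ι → (Fin 2 × Fin 2) → ℂ := fun k j => star (fun p => V p j) ⬝ᵥ c k with hadef
  have hμnn : ∀ j, 0 ≤ μ j := fun j => hpsd.eigenvalues_nonneg j
  have haa : ∀ j j', ∑ k, a k j * (starRingEnd ℂ) (a k j')
      = (μ j' : ℂ) * (if j = j' then 1 else 0) := by
    intro j j'
    have e1 : star (fun p => V p j) ⬝ᵥ (ρ *ᵥ (fun p => V p j'))
        = ∑ k, a k j * (starRingEnd ℂ) (a k j') := by
      calc star (fun p => V p j) ⬝ᵥ (ρ *ᵥ (fun p => V p j'))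
          = ∑ p, ∑ q, ∑ k, ((starRingEnd ℂ) (V p j) * c k p)
              * (V q j' * (starRingEnd ℂ) (c k q)) := by
            simp only [dotProduct, Matrix.mulVec, Pi.star_apply, Finset.mul_sum]
            refine Finset.sum_congr rfl fun p _ => Finset.sum_congr rfl fun q _ => ?_
            rw [hρdec p q, Finset.sum_mul, Finset.mul_sum]
            refine Finset.sum_congr rfl fun k _ => ?_
            simp only [RCLike.star_def]
            ring
        _ = ∑ p, ∑ k, ∑ q, ((starRingEnd ℂ) (V p j) * c k p)
              * (V q j' * (starRingEnd ℂ) (c k q)) :=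
            Finset.sum_congr rfl fun p _ => Finset.sum_comm
        _ = ∑ k, ∑ p, ∑ q, ((starRingEnd ℂ) (V p j) * c k p)
              * (V q j' * (starRingEnd ℂ) (c k q)) := Finset.sum_comm
        _ = ∑ k, a k j * (starRingEnd ℂ) (a k j') := by
            refine Finset.sum_congr rfl fun k _ => ?_
            rw [hadef]
            simp only [dotProduct, Pi.star_apply, map_sum, _root_.map_mul,
              Complex.conj_conj, RCLike.star_def]
            rw [Finset.sum_mul_sum]
    have e2 : star (fun p => V p j) ⬝ᵥ (ρ *ᵥ (fun p => V p j'))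
        = (μ j' : ℂ) * (if j = j' then 1 else 0) := by
      rw [hgeig j']
      have h7 : star (fun p => V p j) ⬝ᵥ (fun p => (μ j' : ℂ) * V p j')
          = (μ j' : ℂ) * (star (fun p => V p j) ⬝ᵥ (fun p => V p j')) := by
        simp only [dotProduct, Pi.star_apply, Finset.mul_sum]
        exact Finset.sum_congr rfl fun p _ => by ring
      rw [h7, horth j j']
    rw [← e1, e2]
  have hazero : ∀ j, μ j = 0 → ∀ k, a k j = 0 := by
    intro j hj k
    have h8 := haa j j
    rw [if_pos rfl, hj, mul_one] at h8
    push_cast at h8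
    have h9 : ∑ k, (Complex.normSq (a k j) : ℂ) = 0 := by
      rw [← h8]
      exact Finset.sum_congr rfl fun k _ => by rw [Complex.mul_conj]
    have h10 : ∑ k, Complex.normSq (a k j) = 0 := by exact_mod_cast h9
    have h11 := (Finset.sum_eq_zero_iff_of_nonneg
      (fun k _ => Complex.normSq_nonneg (a k j))).mp h10 k (Finset.mem_univ k)
    exact Complex.normSq_eq_zero.mp h11
  set b : ι → (Fin 2 × Fin 2) → ℂ :=
    fun k j => if μ j = 0 then 0 else ((Real.sqrt (μ j) : ℝ) : ℂ)⁻¹ * a k j with hbdef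
  have hsqrtne : ∀ j, μ j ≠ 0 → ((Real.sqrt (μ j) : ℝ) : ℂ) ≠ 0 := by
    intro j hj
    have : 0 < μ j := lt_of_le_of_ne (hμnn j) (Ne.symm hj)
    simp [Complex.ofReal_ne_zero, Real.sqrt_ne_zero', this]
  have hab : ∀ k j, a k j = ((Real.sqrt (μ j) : ℝ) : ℂ) * b k j := by
    intro k j
    by_cases hj : μ j = 0
    · simp [hbdef, hj, hazero j hj k]
    · rw [hbdef]
      simp only [hj, if_false]
      rw [← mul_assoc, mul_inv_cancel₀ (hsqrtne j hj), one_mul]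
  have hbb : ∀ j j', ∑ k, b k j * (starRingEnd ℂ) (b k j')
      = if j = j' then (((if μ j = 0 then (0:ℝ) else 1) : ℝ) : ℂ) else 0 := by
    intro j j'
    by_cases hj : μ j = 0
    · simp [hbdef, hj]
    · by_cases hj' : μ j' = 0
      · have hne : j ≠ j' := fun h => hj (h ▸ hj')
        simp [hbdef, hj', hne]
      · have h12 : ∑ k, b k j * (starRingEnd ℂ) (b k j')
            = ((Real.sqrt (μ j) : ℝ) : ℂ)⁻¹ * ((Real.sqrt (μ j') : ℝ) : ℂ)⁻¹
              * ∑ k, a k j * (starRingEnd ℂ) (a k j') := by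
          rw [Finset.mul_sum]
          refine Finset.sum_congr rfl fun k _ => ?_
          rw [hbdef]
          simp only [hj, hj', if_false, _root_.map_mul, map_inv₀, Complex.conj_ofReal]
          ring
        rw [h12, haa j j']
        by_cases hjj : j = j'
        · subst hjj
          rw [if_pos rfl, if_pos rfl, mul_one]
          have h13 : ((Real.sqrt (μ j) : ℝ) : ℂ) * ((Real.sqrt (μ j) : ℝ) : ℂ) = (μ j : ℂ) := by
            rw [← Complex.ofReal_mul, Real.mul_self_sqrt (hμnn j)]
          rw [if_neg hj]
          field_simp
          rw [pow_two, h13, Complex.ofReal_one]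
          exact div_self (Complex.ofReal_ne_zero.mpr hj)
        · rw [if_neg hjj, if_neg hjj, mul_zero, mul_zero]
    
  set w : ι → (Fin 2 × Fin 2) → ℂ := fun k p => ∑ j, b k j * V p j with hwdef
  have hχw : ∀ k, c k = hpsd.sqrt *ᵥ w k := by
    intro k
    funext p
    have h14 : (hpsd.sqrt *ᵥ w k) p = ∑ j, b k j * ((hpsd.sqrt *ᵥ (fun q => V q j)) p) := by
      simp only [Matrix.mulVec, dotProduct, hwdef, Finset.mul_sum]
      rw [Finset.sum_comm]
      exact Finset.sum_congr rfl fun j _ => Finset.sum_congr rfl fun q _ => by ring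
    rw [h14]
    have h15 : ∀ j, b k j * ((hpsd.sqrt *ᵥ (fun q => V q j)) p) = a k j * V p j := by
      intro j
      rw [hgsq j, hab k j]
      ring
    rw [Finset.sum_congr rfl fun j _ => h15 j]
    have h16 := aux_basis_exp V hVu' (c k) p
    rw [h16]
  set u : ι → (Fin 2 × Fin 2) → ℂ := fun k => star ((sigmaY ⊗ₖ sigmaY) *ᵥ w k) with hudef
  have hd1 : ∀ j : Fin 2 × Fin 2, (if μ j = 0 then (0:ℝ) else 1) ≤ 1 := by
    intro j; split <;> norm_num
  have hVu2 : (Vᴴ)ᴴ * Vᴴ = 1 := by rw [Matrix.conjTranspose_conjTranspose, hVu']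
  have hwf : ∀ f : (Fin 2 × Fin 2) → ℂ,
      ∑ k, Complex.normSq (star (w k) ⬝ᵥ f) ≤ ∑ p, Complex.normSq (f p) := by
    intro f
    have h17 : ∀ k, star (w k) ⬝ᵥ f = ∑ j, (starRingEnd ℂ) (b k j) * ((Vᴴ *ᵥ f) j) := by
      intro k
      simp only [dotProduct, Matrix.mulVec, Pi.star_apply, hwdef,
        Matrix.conjTranspose_apply, RCLike.star_def, map_sum, _root_.map_mul, Finset.mul_sum,
        Finset.sum_mul]
      rw [Finset.sum_comm]
      exact Finset.sum_congr rfl fun j _ => Finset.sum_congr rfl fun p _ => by ring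
    calc ∑ k, Complex.normSq (star (w k) ⬝ᵥ f)
        = ∑ k, Complex.normSq (∑ j, (starRingEnd ℂ) (b k j) * ((Vᴴ *ᵥ f) j)) :=
          Finset.sum_congr rfl fun k _ => by rw [h17 k]
      _ ≤ ∑ j, Complex.normSq ((Vᴴ *ᵥ f) j) :=
          aux_frame_coeff b (fun j => if μ j = 0 then (0:ℝ) else 1) hd1 hbb (Vᴴ *ᵥ f)
      _ = ∑ p, Complex.normSq (f p) := aux_unitary_normSq Vᴴ hVu2 f
  have hYu : (sigmaY ⊗ₖ sigmaY)ᴴ * (sigmaY ⊗ₖ sigmaY) = 1 := by rw [aux_YH, aux_YY]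
  have huf : ∀ f : (Fin 2 × Fin 2) → ℂ,
      ∑ k, Complex.normSq (star (u k) ⬝ᵥ f) ≤ ∑ p, Complex.normSq (f p) := by
    intro f
    have hb' : ∀ j j', ∑ k, (starRingEnd ℂ) (b k j) * (starRingEnd ℂ) ((starRingEnd ℂ) (b k j'))
        = if j = j' then (((if μ j = 0 then (0:ℝ) else 1) : ℝ) : ℂ) else 0 := by
      intro j j'
      have h18 : ∑ k, (starRingEnd ℂ) (b k j) * (starRingEnd ℂ) ((starRingEnd ℂ) (b k j'))
          = (starRingEnd ℂ) (∑ k, b k j * (starRingEnd ℂ) (b k j')) := by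
        rw [map_sum]
        exact Finset.sum_congr rfl fun k _ => by
          simp only [_root_.map_mul, Complex.conj_conj]
      rw [h18, hbb j j']
      split <;> simp [Complex.conj_ofReal]
    have h19 : ∀ k, star (u k) ⬝ᵥ f
        = ∑ j, (starRingEnd ℂ) ((starRingEnd ℂ) (b k j))
            * (∑ q, V q j * (((sigmaY ⊗ₖ sigmaY) *ᵥ f) q)) := by
      intro k
      rw [hudef]
      simp only [star_star]
      have h20 : ((sigmaY ⊗ₖ sigmaY) *ᵥ w k) ⬝ᵥ f
          = ∑ q, w k q * (((sigmaY ⊗ₖ sigmaY) *ᵥ f) q) := by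
        have hYTf : ∀ p q, (sigmaY ⊗ₖ sigmaY) p q = (sigmaY ⊗ₖ sigmaY) q p := by
          intro p q
          have := congrFun (congrFun aux_YT q) p
          simpa [Matrix.transpose_apply] using this
        simp only [dotProduct, Matrix.mulVec, Finset.sum_mul, Finset.mul_sum]
        rw [Finset.sum_comm]
        refine Finset.sum_congr rfl fun q _ => Finset.sum_congr rfl fun p _ => ?_
        rw [hYTf p q]
        ring
      rw [h20]
      simp only [hwdef, Complex.conj_conj, Finset.sum_mul, Finset.mul_sum]
      rw [Finset.sum_comm]
      exact Finset.sum_congr rfl fun j _ => Finset.sum_congr rfl fun q _ => by ring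
    calc ∑ k, Complex.normSq (star (u k) ⬝ᵥ f)
        = ∑ k, Complex.normSq (∑ j, (starRingEnd ℂ) ((starRingEnd ℂ) (b k j))
            * (∑ q, V q j * (((sigmaY ⊗ₖ sigmaY) *ᵥ f) q))) :=
          Finset.sum_congr rfl fun k _ => by rw [h19 k]
      _ ≤ ∑ j, Complex.normSq (∑ q, V q j * (((sigmaY ⊗ₖ sigmaY) *ᵥ f) q)) :=
          aux_frame_coeff (fun k j => (starRingEnd ℂ) (b k j))
            (fun j => if μ j = 0 then (0:ℝ) else 1) hd1 hb'
            (fun j => ∑ q, V q j * (((sigmaY ⊗ₖ sigmaY) *ᵥ f) q))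
      _ = ∑ j, Complex.normSq ((Vᴴ *ᵥ (star ((sigmaY ⊗ₖ sigmaY) *ᵥ f))) j) := by
          refine Finset.sum_congr rfl fun j _ => ?_
          rw [← Complex.normSq_conj]
          congr 1
          simp only [Matrix.mulVec, dotProduct, Matrix.conjTranspose_apply,
            Pi.star_apply, RCLike.star_def, map_sum, _root_.map_mul]
      _ = ∑ p, Complex.normSq ((star ((sigmaY ⊗ₖ sigmaY) *ᵥ f)) p) :=
          aux_unitary_normSq Vᴴ hVu2 _
      _ = ∑ p, Complex.normSq ((((sigmaY ⊗ₖ sigmaY)) *ᵥ f) p) := by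
          refine Finset.sum_congr rfl fun p _ => ?_
          simp [Pi.star_apply, Complex.normSq_conj]
      _ = ∑ p, Complex.normSq (f p) := aux_unitary_normSq _ hYu f
  have hconc : ∀ k, conc2 (χ k)
      = ‖star (u k) ⬝ᵥ ((hSpsd.sqrt * hpsd.sqrt) *ᵥ w k)‖ := by
    intro k
    rw [aux_conc2_eq (χ k)]
    congr 1
    have hL : star (u k) ⬝ᵥ ((hSpsd.sqrt * hpsd.sqrt) *ᵥ w k)
        = (w k ᵥ* ((sigmaY ⊗ₖ sigmaY)ᵀ * (hSpsd.sqrt * hpsd.sqrt))) ⬝ᵥ w k := by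
      rw [hudef]
      simp only [star_star]
      rw [Matrix.dotProduct_mulVec, Matrix.vecMul_mulVec]
    have hR : (fun p : Fin 2 × Fin 2 => χ k p.1 p.2) ⬝ᵥ
          ((sigmaY ⊗ₖ sigmaY) *ᵥ (fun p : Fin 2 × Fin 2 => χ k p.1 p.2))
        = (w k ᵥ* ((hpsd.sqrt)ᵀ * (sigmaY ⊗ₖ sigmaY) * hpsd.sqrt)) ⬝ᵥ w k := by
      have hck : (fun p : Fin 2 × Fin 2 => χ k p.1 p.2) = hpsd.sqrt *ᵥ w k := hχw k
      rw [hck]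
      rw [Matrix.dotProduct_mulVec, Matrix.vecMul_mulVec, Matrix.dotProduct_mulVec,
        Matrix.vecMul_vecMul]
    rw [hR, hL]
    congr 2
    rw [aux_YT, ← Matrix.mul_assoc, hkey, Matrix.mul_assoc]
  calc ∑ k, conc2 (χ k)
      = ∑ k, ‖star (u k) ⬝ᵥ ((hSpsd.sqrt * hpsd.sqrt) *ᵥ w k)‖ :=
        Finset.sum_congr rfl fun k _ => hconc k
    _ ≤ ∑ j, Real.sqrt (hMpsd.1.eigenvalues j) := aux_core _ _ hMpsd hBB u w huf hwf
    _ = CoA ρ := hCoA.symm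
end
end

section
/- Let ψ : Fin 2 → Fin 2 → Fin n → ℂ be a unit vector whose coefficient matrices A^l = (ψ i j l)_{ij} satisfy: (A^l)† A^l is diagonal with diagonal entries q₀^l ≥ q₁^l ≥ 0 for every l : Fin n. Let q₁ = ∑_l q₁^l and let p₁ be the smallest eigenvalue of ρ_A = ∑_l A^l (A^l)†, and assume q₁ ≤ p₁. Then the maximum, over all finite families of matrices (M_m), M_m ∈ Matrix (Fin n) (Fin n) ℂ with ∑_m (M_m)† M_m = 1 (generalized measurements by Sapna), of the average residual entanglement ∑_m 2·λ_min(σ_B^m) equals 2q₁ = min{2p₁, 2q₁}, where σ_B^m(j,j') = ∑_{i,l} c^m(i,j,l) · conj(c^m(i,j',l)) with conditional amplitudes c^m(i,j,l) = ∑_{l'} (M_m)_{l l'} ψ i j l'. Moreover this maximum is attained by the projective measurement M_l = |l⟩⟨l|. -/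
open Matrix Complex Kronecker Finset
open scoped ComplexOrder

noncomputable section

/-- Coefficient matrix `A^l = (ψ i j l)_{ij}` of a `2×2×n` pure state. -/
def coeffMat {n : ℕ} (ψ : Fin 2 → Fin 2 → Fin n → ℂ) (l : Fin n) :
    Matrix (Fin 2) (Fin 2) ℂ :=
  Matrix.of fun i j => ψ i j l

/-- Conditional (unnormalized) amplitudes after Sapna applies the Kraus operator `M`. -/
def condAmp {n : ℕ} (ψ : Fin 2 → Fin 2 → Fin n → ℂ) (M : Matrix (Fin n) (Fin n) ℂ)
    (i j : Fin 2) (l : Fin n) : ℂ :=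
  ∑ l', M l l' * ψ i j l'

/-- Bob's (unnormalized) reduced density matrix conditioned on Sapna's outcome `M`. -/
def sigmaB {n : ℕ} (ψ : Fin 2 → Fin 2 → Fin n → ℂ) (M : Matrix (Fin n) (Fin n) ℂ) :
    Matrix (Fin 2) (Fin 2) ℂ :=
  fun j j' => ∑ i, ∑ l, condAmp ψ M i j l * (starRingEnd ℂ) (condAmp ψ M i j' l)

section Aux

lemma aux_min_of_sum_prod (x y a b : ℝ) (hs : x + y = a + b) (hp : x * y = a * b) :
    min x y = min a b := by
  have hx : (x - a) * (x - b) = 0 := by linear_combination x * hs - hp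
  rcases mul_eq_zero.1 hx with h | h
  · have hxa := sub_eq_zero.1 h
    have : y = b := by linarith
    rw [hxa, this]
  · have hxb := sub_eq_zero.1 h
    have : y = a := by linarith
    rw [hxb, this, min_comm]

lemma aux_trace_eq_sum_eig {n : Type*} [Fintype n] [DecidableEq n] (A : Matrix n n ℂ)
    (hA : A.IsHermitian) : A.trace = ∑ i, (hA.eigenvalues i : ℂ) := by
  conv_lhs => rw [hA.spectral_theorem]
  rw [Unitary.conjStarAlgAut_apply, Matrix.trace_mul_cycle]
  have h1 : (star (hA.eigenvectorUnitary : Matrix n n ℂ)) * (hA.eigenvectorUnitary : Matrix n n ℂ) = 1 :=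
    Unitary.star_mul_self_of_mem hA.eigenvectorUnitary.2
  rw [h1, one_mul, Matrix.trace_diagonal]
  rfl

lemma aux_eig_sum (M : Matrix (Fin 2) (Fin 2) ℂ) (h : M.IsHermitian) :
    h.eigenvalues 0 + h.eigenvalues 1 = (M 0 0).re + (M 1 1).re := by
  have ht := aux_trace_eq_sum_eig M h
  have h2 : M.trace = M 0 0 + M 1 1 := by simp [Matrix.trace, Fin.sum_univ_two]
  have := congrArg Complex.re (ht.symm.trans h2)
  simpa [Fin.sum_univ_two] using this

lemma aux_eig_prod (M : Matrix (Fin 2) (Fin 2) ℂ) (h : M.IsHermitian) :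
    h.eigenvalues 0 * h.eigenvalues 1 = (M 0 0).re * (M 1 1).re - Complex.normSq (M 0 1) := by
  have hd := h.det_eq_prod_eigenvalues
  have h10 : M 1 0 = (starRingEnd ℂ) (M 0 1) := by
    have := congrFun (congrFun h 1) 0
    simpa [Matrix.conjTranspose_apply] using this.symm
  have hdet : M.det = M 0 0 * M 1 1 - M 0 1 * (starRingEnd ℂ) (M 0 1) := by
    rw [Matrix.det_fin_two, h10]
  rw [hdet] at hd
  have h00 := (h.coe_re_apply_self 0).symm
  have h11 := (h.coe_re_apply_self 1).symm
  rw [h00, h11, Complex.mul_conj] at hd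
  have := congrArg Complex.re hd
  simpa [Fin.prod_univ_two] using this.symm

lemma aux_lmin2_le_d11 (M : Matrix (Fin 2) (Fin 2) ℂ) (h : M.IsHermitian) :
    lmin2 M ≤ (M 1 1).re := by
  rw [lmin2, dif_pos h]
  have hs := aux_eig_sum M h
  have hp := aux_eig_prod M h
  have hns : 0 ≤ Complex.normSq (M 0 1) := Complex.normSq_nonneg _
  have keyeq : (h.eigenvalues 0 - (M 1 1).re) * (h.eigenvalues 1 - (M 1 1).re)
      = -Complex.normSq (M 0 1) := by linear_combination hp - (M 1 1).re * hs
  have key : (h.eigenvalues 0 - (M 1 1).re) * (h.eigenvalues 1 - (M 1 1).re) ≤ 0 := by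
    rw [keyeq]; linarith
  rcases le_or_gt (h.eigenvalues 0) (h.eigenvalues 1) with hle | hle
  · rw [min_eq_left hle]; nlinarith [key]
  · rw [min_eq_right hle.le]; nlinarith [key]

lemma aux_lmin2_diag (M : Matrix (Fin 2) (Fin 2) ℂ) (h : M.IsHermitian) (h01 : M 0 1 = 0) :
    lmin2 M = min (M 0 0).re (M 1 1).re := by
  rw [lmin2, dif_pos h]
  refine aux_min_of_sum_prod _ _ _ _ (aux_eig_sum M h) ?_
  rw [aux_eig_prod M h, h01]
  simp

lemma aux_sigmaB_isHermitian {n : ℕ} (ψ : Fin 2 → Fin 2 → Fin n → ℂ)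
    (M : Matrix (Fin n) (Fin n) ℂ) : (sigmaB ψ M).IsHermitian := by
  ext j j'
  simp only [Matrix.conjTranspose_apply, sigmaB, star_sum, star_mul', star_star]
  congr 1; ext i; congr 1; ext l
  simp only [Complex.star_def, Complex.conj_conj]; ring

lemma aux_condAmp_eq_mulVec {n : ℕ} (ψ : Fin 2 → Fin 2 → Fin n → ℂ)
    (M : Matrix (Fin n) (Fin n) ℂ) (i j : Fin 2) :
    condAmp ψ M i j = M *ᵥ (fun l => ψ i j l) := by
  ext l; rfl

lemma aux_key_quad {n : ℕ} (M : Matrix (Fin n) (Fin n) ℂ) (v w : Fin n → ℂ) :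
    (M *ᵥ v) ⬝ᵥ star (M *ᵥ w) = ((star w) ᵥ* (Mᴴ * M)) ⬝ᵥ v := by
  rw [star_mulVec, dotProduct_comm, dotProduct_mulVec, vecMul_vecMul]

lemma aux_sigmaB_apply_quad {n : ℕ} (ψ : Fin 2 → Fin 2 → Fin n → ℂ)
    (M : Matrix (Fin n) (Fin n) ℂ) (j j' : Fin 2) :
    sigmaB ψ M j j' = ∑ i, ((star fun l => ψ i j' l) ᵥ* (Mᴴ * M)) ⬝ᵥ (fun l => ψ i j l) := by
  unfold sigmaB
  congr 1; ext i
  rw [← aux_key_quad, ← aux_condAmp_eq_mulVec, ← aux_condAmp_eq_mulVec]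
  simp [dotProduct, Pi.star_apply]

lemma aux_quad_sum {m n : ℕ} (S : Fin m → Matrix (Fin n) (Fin n) ℂ) (u v : Fin n → ℂ) :
    ∑ k, (u ᵥ* (S k)) ⬝ᵥ v = (u ᵥ* (∑ k, S k)) ⬝ᵥ v := by
  simp only [vecMul, dotProduct, Matrix.sum_apply, Finset.sum_mul, Finset.mul_sum]
  rw [Finset.sum_comm]
  congr 1; ext a
  rw [Finset.sum_comm]

lemma aux_sum_sigmaB {n m : ℕ} (ψ : Fin 2 → Fin 2 → Fin n → ℂ)
    (M : Fin m → Matrix (Fin n) (Fin n) ℂ)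
    (hM : ∑ k, (M k)ᴴ * M k = 1) (j j' : Fin 2) :
    ∑ k, sigmaB ψ (M k) j j' = ∑ i, ∑ l, ψ i j l * (starRingEnd ℂ) (ψ i j' l) := by
  simp only [aux_sigmaB_apply_quad]
  rw [Finset.sum_comm]
  congr 1; ext i
  rw [aux_quad_sum, hM, vecMul_one]
  simp [dotProduct, mul_comm]

lemma aux_std_complete (n : ℕ) :
    ∑ l : Fin n, (Matrix.single l l (1 : ℂ))ᴴ * Matrix.single l l (1 : ℂ) = 1 := by
  ext a b
  simp only [Matrix.sum_apply, Matrix.mul_apply, Matrix.single, Matrix.one_apply,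
    Matrix.conjTranspose_apply, Matrix.of_apply, ite_and, apply_ite (starRingEnd ℂ),
    _root_.map_one, _root_.map_zero]
  by_cases hab : a = b
  · subst hab; simp [Finset.sum_ite_eq]
  · simp [Finset.sum_ite_eq, hab, Ne.symm hab]

lemma aux_sigmaB_std {n : ℕ} (ψ : Fin 2 → Fin 2 → Fin n → ℂ) (l : Fin n) (j j' : Fin 2) :
    sigmaB ψ (Matrix.single l l (1 : ℂ)) j j'
      = ∑ i, ψ i j l * (starRingEnd ℂ) (ψ i j' l) := by
  have hc : ∀ (i : Fin 2) (j : Fin 2) (l₁ : Fin n),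
      condAmp ψ (Matrix.single l l (1 : ℂ)) i j l₁ = if l₁ = l then ψ i j l else 0 := by
    intro i j l₁
    simp [condAmp, Matrix.single, ite_and, Finset.sum_ite_eq, eq_comm]
  unfold sigmaB
  simp only [hc]
  congr 1; ext i
  simp [apply_ite (starRingEnd ℂ), ite_mul, mul_ite, Finset.sum_ite_eq]

lemma aux_AhA {n : ℕ} (ψ : Fin 2 → Fin 2 → Fin n → ℂ) (l : Fin n) (j j' : Fin 2) :
    ((coeffMat ψ l)ᴴ * coeffMat ψ l) j j' = ∑ i, (starRingEnd ℂ) (ψ i j l) * ψ i j' l := by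
  simp [coeffMat, Matrix.mul_apply, Matrix.conjTranspose_apply]

end Aux

theorem max_average_residual_entanglement (n : ℕ) (ψ : Fin 2 → Fin 2 → Fin n → ℂ)
    (hψ : ∑ i, ∑ j, ∑ l, Complex.normSq (ψ i j l) = 1)
    (hdiag : ∀ l : Fin n, ((coeffMat ψ l)ᴴ * coeffMat ψ l).IsDiag)
    (hord : ∀ l : Fin n,
      0 ≤ (((coeffMat ψ l)ᴴ * coeffMat ψ l) 1 1).re ∧
      (((coeffMat ψ l)ᴴ * coeffMat ψ l) 1 1).re ≤
        (((coeffMat ψ l)ᴴ * coeffMat ψ l) 0 0).re)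
    (q₁ : ℝ) (hq₁ : q₁ = ∑ l, (((coeffMat ψ l)ᴴ * coeffMat ψ l) 1 1).re)
    (p₁ : ℝ) (hp₁ : p₁ = lmin2 (∑ l, coeffMat ψ l * (coeffMat ψ l)ᴴ))
    (hqp : q₁ ≤ p₁) :
    IsGreatest {x : ℝ | ∃ (m : ℕ) (M : Fin m → Matrix (Fin n) (Fin n) ℂ),
        (∑ k, (M k)ᴴ * M k = 1) ∧ x = ∑ k, 2 * lmin2 (sigmaB ψ (M k))}
      (2 * q₁) ∧
    2 * q₁ = min (2 * p₁) (2 * q₁) ∧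
    (∑ l : Fin n, (Matrix.single l l (1 : ℂ))ᴴ * Matrix.single l l (1 : ℂ) = 1) ∧
    ∑ l : Fin n, 2 * lmin2 (sigmaB ψ (Matrix.single l l (1 : ℂ))) = 2 * q₁ := by
  have hconjz : ∀ z : ℂ, (starRingEnd ℂ) z * z = ((Complex.normSq z : ℝ) : ℂ) := fun z => by
    rw [mul_comm, Complex.mul_conj]
  have hzconj : ∀ z : ℂ, z * (starRingEnd ℂ) z = ((Complex.normSq z : ℝ) : ℂ) :=
    fun z => Complex.mul_conj z
  -- diagonal entries of AᴴA
  have hAdiag : ∀ (l : Fin n) (j : Fin 2),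
      (((coeffMat ψ l)ᴴ * coeffMat ψ l) j j).re = ∑ i, Complex.normSq (ψ i j l) := by
    intro l j
    rw [aux_AhA]
    simp only [hconjz]
    rw [← Complex.ofReal_sum]
    exact Complex.ofReal_re _
  -- diagonal entries of sigmaB for the projective measurement
  have hstd_diag : ∀ (l : Fin n) (j : Fin 2),
      (sigmaB ψ (Matrix.single l l (1 : ℂ)) j j).re = ∑ i, Complex.normSq (ψ i j l) := by
    intro l j
    rw [aux_sigmaB_std]
    simp only [hzconj]
    rw [← Complex.ofReal_sum]
    exact Complex.ofReal_re _
  -- lmin2 of sigmaB for the projective measurement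
  have hlmin_std : ∀ l : Fin n,
      lmin2 (sigmaB ψ (Matrix.single l l (1 : ℂ)))
        = (((coeffMat ψ l)ᴴ * coeffMat ψ l) 1 1).re := by
    intro l
    have h0 : ((coeffMat ψ l)ᴴ * coeffMat ψ l) 0 1 = 0 := (hdiag l) (by decide)
    rw [aux_AhA] at h0
    have h01 : sigmaB ψ (Matrix.single l l (1 : ℂ)) 0 1 = 0 := by
      rw [aux_sigmaB_std]
      have := congrArg (starRingEnd ℂ) h0
      simpa [map_sum, _root_.map_mul] using this
    rw [aux_lmin2_diag _ (aux_sigmaB_isHermitian ψ _) h01]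
    rw [hstd_diag l 0, hstd_diag l 1, ← hAdiag l 0, ← hAdiag l 1]
    exact min_eq_right (hord l).2
  -- part 3
  have part3 : ∑ l : Fin n, (Matrix.single l l (1 : ℂ))ᴴ * Matrix.single l l (1 : ℂ) = 1 :=
    aux_std_complete n
  -- part 4
  have part4 : ∑ l : Fin n, 2 * lmin2 (sigmaB ψ (Matrix.single l l (1 : ℂ))) = 2 * q₁ := by
    rw [hq₁, Finset.mul_sum]
    exact Finset.sum_congr rfl fun l _ => by rw [hlmin_std l]
  -- upper bound
  have hub : ∀ x ∈ {x : ℝ | ∃ (m : ℕ) (M : Fin m → Matrix (Fin n) (Fin n) ℂ),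
      (∑ k, (M k)ᴴ * M k = 1) ∧ x = ∑ k, 2 * lmin2 (sigmaB ψ (M k))}, x ≤ 2 * q₁ := by
    rintro x ⟨m, M, hM, rfl⟩
    have hsum : ∑ k, (sigmaB ψ (M k) 1 1).re = q₁ := by
      have h1 : ∑ k, sigmaB ψ (M k) 1 1 = ∑ i, ∑ l, ψ i 1 l * (starRingEnd ℂ) (ψ i 1 l) :=
        aux_sum_sigmaB ψ M hM 1 1
      have h2 : ∑ k, (sigmaB ψ (M k) 1 1).re = (∑ k, sigmaB ψ (M k) 1 1).re := by
        rw [Complex.re_sum]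
      rw [h2, h1]
      simp only [hzconj]
      have hcast : (∑ i, ∑ l, ((Complex.normSq (ψ i 1 l) : ℝ) : ℂ))
          = (((∑ i, ∑ l, Complex.normSq (ψ i 1 l) : ℝ)) : ℂ) := by push_cast; rfl
      rw [hcast, Complex.ofReal_re, hq₁, Finset.sum_comm]
      exact Finset.sum_congr rfl fun l _ => (hAdiag l 1).symm
    calc ∑ k, 2 * lmin2 (sigmaB ψ (M k))
        ≤ ∑ k, 2 * (sigmaB ψ (M k) 1 1).re := by
          refine Finset.sum_le_sum fun k _ => ?_
          have := aux_lmin2_le_d11 _ (aux_sigmaB_isHermitian ψ (M k))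
          linarith
      _ = 2 * q₁ := by rw [← Finset.mul_sum, hsum]
  refine ⟨⟨⟨n, fun l => Matrix.single l l 1, part3, part4.symm⟩, hub⟩,
    (min_eq_right (by linarith)).symm, part3, part4⟩
end
end
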